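/- Let (G,H) and (E,K) be Friedrichs modules, let D ∈ B(G,E), and let a, c ∈ B(E,E*) satisfy, for some μ, ν > 0 and all u ∈ G, the coercivity estimates Re⟨Du, aDu⟩ ≥ μ‖u‖_G² − ν‖u‖_H² and Re⟨Du, cDu⟩ ≥ μ‖u‖_G² − ν‖u‖_H² (so that for Re z ≤ −ν the operators D*aD − z and D*cD − z are bijective maps G → G*). Fix z with Re z ≤ −ν, and let Δ_a, Δ_c be the operators induced in H by D*aD, D*cD. Assume D∘(Δ_c − z)⁻¹ ∈ B(H,K) is right decay preserving and D∘(D*cD − z)⁻¹∘D* ∈ B(K) is right decay preserving. If a − c restricts to a bounded operator on K which is right decay preserving, then D∘(Δ_a − z)⁻¹ ∈ B(H,K) is right decay preserving and D∘(D*aD − z)⁻¹∘D* ∈ B(K) is right decay preserving. The analogous statement holds with 'right' replaced by 'left' throughout. -/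

import Mathlib

open ContinuousLinearMap

noncomputable section

/-- The space of continuous antilinear forms on `G` (the "adjoint space" `G*`). -/
abbrev AntiDual (G : Type*) [NormedAddCommGroup G] [NormedSpace ℂ G] : Type _ :=
  G →SL[starRingEnd ℂ] ℂ

/-- Given a continuous embedding `e : G → H` of a normed space into a Hilbert space,
the canonical map `H → G*`, `v ↦ (u ↦ ⟪e u, v⟫)`. -/
def toAntiDual {G H : Type*} [NormedAddCommGroup G] [NormedSpace ℂ G]
    [NormedAddCommGroup H] [InnerProductSpace ℂ H] (e : G →L[ℂ] H) :
    H →L[ℂ] AntiDual G :=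
  LinearMap.mkContinuous
    { toFun := fun v => ((innerSL ℂ).flip v).comp e
      map_add' := fun v w => by ext u; simp
      map_smul' := fun c v => by ext u; simp }
    ‖e‖ (fun v => by
      have hv : ‖(innerSL ℂ).flip v‖ ≤ ‖v‖ :=
        opNorm_le_bound _ (norm_nonneg v)
          (fun u => by simpa [mul_comm] using norm_inner_le_norm (𝕜 := ℂ) u v)
      calc ‖((innerSL ℂ).flip v).comp e‖ ≤ ‖(innerSL ℂ).flip v‖ * ‖e‖ := opNorm_comp_le _ _
      _ ≤ ‖v‖ * ‖e‖ := by gcongr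
      _ = ‖e‖ * ‖v‖ := mul_comm _ _)

/-- Precomposition with `D : G →L E`, as a map `E* →L G*`; this is the adjoint `D*`. -/
def precompAntiDual {G E : Type*} [NormedAddCommGroup G] [NormedSpace ℂ G]
    [NormedAddCommGroup E] [NormedSpace ℂ E] (D : G →L[ℂ] E) :
    AntiDual E →L[ℂ] AntiDual G :=
  LinearMap.mkContinuous
    { toFun := fun w => w.comp D
      map_add' := fun w₁ w₂ => by ext u; simp
      map_smul' := fun c w => by ext u; simp }
    ‖D‖ (fun w => by
      calc ‖w.comp D‖ ≤ ‖w‖ * ‖D‖ := opNorm_comp_le _ _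
      _ = ‖D‖ * ‖w‖ := mul_comm _ _)

/-- Auxiliary: the antilinear form `u ↦ conj ⟨v, a u⟩`. -/
def adjointFormAux {E : Type*} [NormedAddCommGroup E] [NormedSpace ℂ E]
    (a : E →L[ℂ] AntiDual E) (v : E) : AntiDual E :=
  LinearMap.mkContinuous
    { toFun := fun u => starRingEnd ℂ (a u v)
      map_add' := fun u₁ u₂ => by simp
      map_smul' := fun c u => by simp }
    (‖a‖ * ‖v‖) (fun u => by
      simp only [LinearMap.coe_mk, AddHom.coe_mk]
      calc ‖starRingEnd ℂ (a u v)‖ = ‖a u v‖ := by simp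
      _ ≤ ‖a u‖ * ‖v‖ := (a u).le_opNorm v
      _ ≤ (‖a‖ * ‖u‖) * ‖v‖ := by gcongr; exact a.le_opNorm u
      _ = ‖a‖ * ‖v‖ * ‖u‖ := by ring)

theorem adjointFormAux_norm_le {E : Type*} [NormedAddCommGroup E] [NormedSpace ℂ E]
    (a : E →L[ℂ] AntiDual E) (v : E) : ‖adjointFormAux a v‖ ≤ ‖a‖ * ‖v‖ :=
  LinearMap.mkContinuous_norm_le _ (mul_nonneg (norm_nonneg a) (norm_nonneg v)) _

@[simp] theorem adjointFormAux_apply {E : Type*} [NormedAddCommGroup E] [NormedSpace ℂ E]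
    (a : E →L[ℂ] AntiDual E) (v u : E) :
    adjointFormAux a v u = starRingEnd ℂ (a u v) := rfl

/-- The adjoint form `a* ∈ B(E,E*)` of `a ∈ B(E,E*)`: `⟨u, a* v⟩ = conj ⟨v, a u⟩`. -/
def adjointForm {E : Type*} [NormedAddCommGroup E] [NormedSpace ℂ E]
    (a : E →L[ℂ] AntiDual E) : E →L[ℂ] AntiDual E :=
  LinearMap.mkContinuous
    { toFun := fun v => adjointFormAux a v
      map_add' := fun v w => by ext u; simp
      map_smul' := fun c v => by ext u; simp }
    ‖a‖ (fun v => adjointFormAux_norm_le a v)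


variable {H K : Type*}

/-- `M` is the multiplier algebra of a Banach module structure on `H`: a non-degenerate
norm-closed subalgebra of `B(H)` possessing a bounded approximate unit. -/
structure IsBanachModule (H : Type*) [NormedAddCommGroup H] [NormedSpace ℂ H]
    (M : Set (H →L[ℂ] H)) : Prop where
  zero_mem : (0 : H →L[ℂ] H) ∈ M
  add_mem : ∀ {A B : H →L[ℂ] H}, A ∈ M → B ∈ M → A + B ∈ M
  smul_mem : ∀ (c : ℂ) {A : H →L[ℂ] H}, A ∈ M → c • A ∈ M
  mul_mem : ∀ {A B : H →L[ℂ] H}, A ∈ M → B ∈ M → A.comp B ∈ M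
  isClosed : IsClosed M
  nondegenerate : Dense (↑(Submodule.span ℂ {u : H | ∃ A ∈ M, ∃ v : H, u = A v}) : Set H)
  approx_unit : ∃ C : ℝ, ∀ ε > (0 : ℝ), ∀ F : Finset (H →L[ℂ] H), ↑F ⊆ M →
    ∃ J ∈ M, ‖J‖ ≤ C ∧ ∀ A ∈ F, ‖J.comp A - A‖ ≤ ε ∧ ‖A.comp J - A‖ ≤ ε

/-- A Hilbert module: a Banach module on a Hilbert space whose multiplier algebra is a
C*-algebra of operators (i.e. is moreover closed under adjoints). -/
structure IsHilbertModule (H : Type*) [NormedAddCommGroup H] [InnerProductSpace ℂ H]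
    [CompleteSpace H] (M : Set (H →L[ℂ] H)) extends IsBanachModule H M : Prop where
  star_mem : ∀ {A : H →L[ℂ] H}, A ∈ M → ContinuousLinearMap.adjoint A ∈ M

/-- `B₀ˡ(H,K)`: the closed linear span of the operators `A ∘ T` with `A` in the multiplier
algebra of `K` and `T ∈ B(H,K)` (operators left vanishing at infinity). -/
def B0l [NormedAddCommGroup H] [NormedSpace ℂ H] [NormedAddCommGroup K] [NormedSpace ℂ K]
    (MK : Set (K →L[ℂ] K)) : Set (H →L[ℂ] K) :=
  closure (↑(Submodule.span ℂ
    {S : H →L[ℂ] K | ∃ A ∈ MK, ∃ T : H →L[ℂ] K, S = A.comp T}) : Set (H →L[ℂ] K))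

/-- `B₀ʳ(H,K)`: the closed linear span of the operators `T ∘ A` with `A` in the multiplier
algebra of `H` and `T ∈ B(H,K)` (operators right vanishing at infinity). -/
def B0r [NormedAddCommGroup H] [NormedSpace ℂ H] [NormedAddCommGroup K] [NormedSpace ℂ K]
    (MH : Set (H →L[ℂ] H)) : Set (H →L[ℂ] K) :=
  closure (↑(Submodule.span ℂ
    {S : H →L[ℂ] K | ∃ A ∈ MH, ∃ T : H →L[ℂ] K, S = T.comp A}) : Set (H →L[ℂ] K))

/-- `S ∈ B(H,K)` is left decay preserving. -/
def LeftDecayPreserving [NormedAddCommGroup H] [NormedSpace ℂ H] [NormedAddCommGroup K]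
    [NormedSpace ℂ K] (MH : Set (H →L[ℂ] H)) (MK : Set (K →L[ℂ] K))
    (S : H →L[ℂ] K) : Prop :=
  ∀ A ∈ MH, S.comp A ∈ B0l MK

/-- `S ∈ B(H,K)` is right decay preserving. -/
def RightDecayPreserving [NormedAddCommGroup H] [NormedSpace ℂ H] [NormedAddCommGroup K]
    [NormedSpace ℂ K] (MH : Set (H →L[ℂ] H)) (MK : Set (K →L[ℂ] K))
    (S : H →L[ℂ] K) : Prop :=
  ∀ A ∈ MK, A.comp S ∈ B0r MH


section ApplyLemmas
variable {G H E : Type*} [NormedAddCommGroup G] [NormedSpace ℂ G]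
  [NormedAddCommGroup H] [InnerProductSpace ℂ H]
  [NormedAddCommGroup E] [NormedSpace ℂ E]

@[simp] lemma toAntiDual_apply (e : G →L[ℂ] H) (v : H) (u : G) :
    toAntiDual e v u = inner ℂ (e u) v := rfl

@[simp] lemma precompAntiDual_apply (D : G →L[ℂ] E) (f : AntiDual E) (u : G) :
    precompAntiDual D f u = f (D u) := rfl
end ApplyLemmas

section ClosureSpanHelpers
variable {X Y : Type*} [NormedAddCommGroup X] [NormedSpace ℂ X]
  [NormedAddCommGroup Y] [NormedSpace ℂ Y]

lemma csA_of_mem {s : Set X} {x : X} (hx : x ∈ s) :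
    x ∈ closure (↑(Submodule.span ℂ s) : Set X) :=
  subset_closure (Submodule.subset_span hx)

lemma csA_sub {s : Set X} {x y : X} (hx : x ∈ closure (↑(Submodule.span ℂ s) : Set X))
    (hy : y ∈ closure (↑(Submodule.span ℂ s) : Set X)) :
    x - y ∈ closure (↑(Submodule.span ℂ s) : Set X) := by
  rw [← Submodule.topologicalClosure_coe] at hx hy ⊢
  exact sub_mem hx hy

lemma csA_smul {s : Set X} (r : ℂ) {x : X} (hx : x ∈ closure (↑(Submodule.span ℂ s) : Set X)) :
    r • x ∈ closure (↑(Submodule.span ℂ s) : Set X) := by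
  rw [← Submodule.topologicalClosure_coe] at hx ⊢
  exact Submodule.smul_mem _ r hx

lemma csA_hasSum {s : Set X} {f : ℕ → X} {x : X}
    (hf : ∀ n, f n ∈ closure (↑(Submodule.span ℂ s) : Set X)) (hx : HasSum f x) :
    x ∈ closure (↑(Submodule.span ℂ s) : Set X) := by
  rw [← Submodule.topologicalClosure_coe] at hf ⊢
  exact (Submodule.span ℂ s).isClosed_topologicalClosure.mem_of_tendsto hx
    (Filter.Eventually.of_forall fun b => Submodule.sum_mem _ fun i _ => hf i)

lemma csA_map (Φ : X →L[ℂ] Y) {s : Set X} {t : Set Y}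
    (h : ∀ x ∈ s, Φ x ∈ closure (↑(Submodule.span ℂ t) : Set Y))
    {x : X} (hx : x ∈ closure (↑(Submodule.span ℂ s) : Set X)) :
    Φ x ∈ closure (↑(Submodule.span ℂ t) : Set Y) := by
  have h1 : Submodule.span ℂ s ≤
      (Submodule.span ℂ t).topologicalClosure.comap (Φ : X →ₗ[ℂ] Y) := by
    rw [Submodule.span_le]
    intro x hxs
    have := h x hxs
    rw [← Submodule.topologicalClosure_coe] at this
    exact this
  have h2 : IsClosed (((Submodule.span ℂ t).topologicalClosure.comap
      (Φ : X →ₗ[ℂ] Y) : Submodule ℂ X) : Set X) :=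
    (Submodule.span ℂ t).isClosed_topologicalClosure.preimage Φ.continuous
  have h3 : closure (↑(Submodule.span ℂ s) : Set X) ⊆
      (((Submodule.span ℂ t).topologicalClosure.comap (Φ : X →ₗ[ℂ] Y) : Submodule ℂ X) : Set X) :=
    closure_minimal (SetLike.coe_subset_coe.mpr h1) h2
  have h4 := h3 hx
  rw [← Submodule.topologicalClosure_coe]
  exact h4
end ClosureSpanHelpers

section B0Helpers
variable {H₁ H₂ K₁ K₂ : Type*} [NormedAddCommGroup H₁] [NormedSpace ℂ H₁]
  [NormedAddCommGroup K₁] [NormedSpace ℂ K₁] [NormedAddCommGroup K₂] [NormedSpace ℂ K₂]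
  [NormedAddCommGroup H₂] [NormedSpace ℂ H₂]

lemma B0r_of_mem {MH : Set (H₁ →L[ℂ] H₁)} {A : H₁ →L[ℂ] H₁} (hA : A ∈ MH) :
    A ∈ (B0r MH : Set (H₁ →L[ℂ] H₁)) :=
  csA_of_mem ⟨A, hA, ContinuousLinearMap.id ℂ H₁, by simp⟩

lemma B0r_leftcomp {MH : Set (H₁ →L[ℂ] H₁)} {X : H₁ →L[ℂ] K₁}
    (hX : X ∈ (B0r MH : Set (H₁ →L[ℂ] K₁))) (T : K₁ →L[ℂ] K₂) :
    T.comp X ∈ (B0r MH : Set (H₁ →L[ℂ] K₂)) := by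
  refine csA_map (ContinuousLinearMap.compL ℂ H₁ K₁ K₂ T) ?_ hX
  rintro S ⟨A, hA, T', rfl⟩
  have h : (ContinuousLinearMap.compL ℂ H₁ K₁ K₂ T) (T'.comp A) = (T.comp T').comp A := by
    simp [ContinuousLinearMap.comp_assoc]
  rw [h]
  exact csA_of_mem ⟨A, hA, T.comp T', rfl⟩

lemma B0r_comp {MH : Set (H₁ →L[ℂ] H₁)} {MK : Set (K₁ →L[ℂ] K₁)} {Y : H₁ →L[ℂ] K₁}
    (hY : RightDecayPreserving MH MK Y) {X : K₁ →L[ℂ] K₂}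
    (hX : X ∈ (B0r MK : Set (K₁ →L[ℂ] K₂))) : X.comp Y ∈ (B0r MH : Set (H₁ →L[ℂ] K₂)) := by
  refine csA_map ((ContinuousLinearMap.compL ℂ H₁ K₁ K₂).flip Y) ?_ hX
  rintro S ⟨A, hA, T, rfl⟩
  have h : ((ContinuousLinearMap.compL ℂ H₁ K₁ K₂).flip Y) (T.comp A) = T.comp (A.comp Y) := by
    simp [ContinuousLinearMap.comp_assoc]
  rw [h]
  exact B0r_leftcomp (hY A hA) T

lemma B0l_of_mem {MK : Set (K₁ →L[ℂ] K₁)} {A : K₁ →L[ℂ] K₁} (hA : A ∈ MK) :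
    A ∈ (B0l MK : Set (K₁ →L[ℂ] K₁)) :=
  csA_of_mem ⟨A, hA, ContinuousLinearMap.id ℂ K₁, by simp⟩

lemma B0l_rightcomp {MK : Set (K₁ →L[ℂ] K₁)} {X : H₁ →L[ℂ] K₁}
    (hX : X ∈ (B0l MK : Set (H₁ →L[ℂ] K₁))) (T : H₂ →L[ℂ] H₁) :
    X.comp T ∈ (B0l MK : Set (H₂ →L[ℂ] K₁)) := by
  refine csA_map ((ContinuousLinearMap.compL ℂ H₂ H₁ K₁).flip T) ?_ hX
  rintro S ⟨A, hA, T', rfl⟩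
  have h : ((ContinuousLinearMap.compL ℂ H₂ H₁ K₁).flip T) (A.comp T') = A.comp (T'.comp T) := by
    simp [ContinuousLinearMap.comp_assoc]
  rw [h]
  exact csA_of_mem ⟨A, hA, T'.comp T, rfl⟩

lemma B0l_comp {MK : Set (K₁ →L[ℂ] K₁)} {MK₂ : Set (K₂ →L[ℂ] K₂)} {Y : K₁ →L[ℂ] K₂}
    (hY : LeftDecayPreserving MK MK₂ Y) {X : H₁ →L[ℂ] K₁}
    (hX : X ∈ (B0l MK : Set (H₁ →L[ℂ] K₁))) : Y.comp X ∈ (B0l MK₂ : Set (H₁ →L[ℂ] K₂)) := by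
  refine csA_map (ContinuousLinearMap.compL ℂ H₁ K₁ K₂ Y) ?_ hX
  rintro S ⟨A, hA, T, rfl⟩
  have h : (ContinuousLinearMap.compL ℂ H₁ K₁ K₂ Y) (A.comp T) = (Y.comp A).comp T := by
    simp [ContinuousLinearMap.comp_assoc]
  rw [h]
  exact B0l_rightcomp (hY A hA) T
end B0Helpers

section Specs
variable {G H K : Type*} [NormedAddCommGroup G] [NormedSpace ℂ G]
  [NormedAddCommGroup H] [NormedSpace ℂ H] [NormedAddCommGroup K] [NormedSpace ℂ K]

def specW (L : ℝ → (G →L[ℂ] AntiDual G)) (eSt : H →L[ℂ] AntiDual G) (ED : G →L[ℂ] K)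
    (t : ℝ) (W : H →L[ℂ] K) : Prop :=
  ∀ v : H, ∃ u : G, L t u = eSt v ∧ W v = ED u

def specT (L : ℝ → (G →L[ℂ] AntiDual G)) (DE : K →L[ℂ] AntiDual G) (ED : G →L[ℂ] K)
    (t : ℝ) (T : K →L[ℂ] K) : Prop :=
  ∀ w : K, ∃ u : G, L t u = DE w ∧ T w = ED u

variable {L : ℝ → (G →L[ℂ] AntiDual G)} {eSt : H →L[ℂ] AntiDual G} {DE : K →L[ℂ] AntiDual G}
  {ED : G →L[ℂ] K} {m : K →L[ℂ] K} {s t : ℝ}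

lemma specR1 (hdiff : ∀ (s t : ℝ) (u : G), L t u = L s u + ((t - s : ℝ) : ℂ) • DE (m (ED u)))
    (huniq_s : ∀ u u' : G, L s u = L s u' → u = u')
    {Ts Tt : K →L[ℂ] K} (hTs : specT L DE ED s Ts) (hTt : specT L DE ED t Tt) :
    Tt = Ts - ((t - s : ℝ) : ℂ) • (Ts.comp (m.comp Tt)) := by
  ext w
  obtain ⟨ut, h1, h2⟩ := hTt w
  obtain ⟨u', h3, h4⟩ := hTs (w - ((t - s : ℝ) : ℂ) • m (Tt w))
  have h5 : L s ut = DE (w - ((t - s : ℝ) : ℂ) • m (Tt w)) := by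
    have h6 := hdiff s t ut
    rw [h1] at h6
    rw [map_sub, map_smul, h2]
    exact eq_sub_of_add_eq h6.symm
  have h7 := huniq_s u' ut (h3.trans h5.symm)
  have h8 : Ts w - ((t - s : ℝ) : ℂ) • Ts (m (Tt w)) = Tt w := by
    calc Ts w - ((t - s : ℝ) : ℂ) • Ts (m (Tt w))
        = Ts (w - ((t - s : ℝ) : ℂ) • m (Tt w)) := by rw [map_sub, map_smul]
      _ = ED u' := h4
      _ = ED ut := by rw [h7]
      _ = Tt w := h2.symm
  simpa [ContinuousLinearMap.sub_apply, ContinuousLinearMap.smul_apply,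
    ContinuousLinearMap.comp_apply] using h8.symm

lemma specR2 (hdiff : ∀ (s t : ℝ) (u : G), L t u = L s u + ((t - s : ℝ) : ℂ) • DE (m (ED u)))
    (huniq_t : ∀ u u' : G, L t u = L t u' → u = u')
    {Ts Tt : K →L[ℂ] K} (hTs : specT L DE ED s Ts) (hTt : specT L DE ED t Tt) :
    Tt = Ts - ((t - s : ℝ) : ℂ) • (Tt.comp (m.comp Ts)) := by
  ext w
  obtain ⟨us, h1, h2⟩ := hTs w
  obtain ⟨u'', h3, h4⟩ := hTt (w + ((t - s : ℝ) : ℂ) • m (Ts w))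
  have h5 : L t us = DE (w + ((t - s : ℝ) : ℂ) • m (Ts w)) := by
    have h6 := hdiff s t us
    rw [h1] at h6
    rw [map_add, map_smul, h2]
    exact h6
  have h7 := huniq_t u'' us (h3.trans h5.symm)
  have h8 : Tt w + ((t - s : ℝ) : ℂ) • Tt (m (Ts w)) = Ts w := by
    calc Tt w + ((t - s : ℝ) : ℂ) • Tt (m (Ts w))
        = Tt (w + ((t - s : ℝ) : ℂ) • m (Ts w)) := by rw [map_add, map_smul]
      _ = ED u'' := h4
      _ = ED us := by rw [h7]
      _ = Ts w := h2.symm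
  have h9 := eq_sub_of_add_eq h8
  simpa [ContinuousLinearMap.sub_apply, ContinuousLinearMap.smul_apply,
    ContinuousLinearMap.comp_apply] using h9

lemma specR3 (hdiff : ∀ (s t : ℝ) (u : G), L t u = L s u + ((t - s : ℝ) : ℂ) • DE (m (ED u)))
    (huniq_t : ∀ u u' : G, L t u = L t u' → u = u')
    {Ws Wt : H →L[ℂ] K} {Tt : K →L[ℂ] K}
    (hWs : specW L eSt ED s Ws) (hWt : specW L eSt ED t Wt) (hTt : specT L DE ED t Tt) :
    Wt = Ws - ((t - s : ℝ) : ℂ) • (Tt.comp (m.comp Ws)) := by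
  ext v
  obtain ⟨us, h1, h2⟩ := hWs v
  obtain ⟨u1, h3, h4⟩ := hWt v
  obtain ⟨u2, h5, h6⟩ := hTt (m (Ws v))
  have h7 : L t (u1 + ((t - s : ℝ) : ℂ) • u2) = eSt v + ((t - s : ℝ) : ℂ) • DE (m (Ws v)) := by
    rw [map_add, map_smul, h3, h5]
  have h8 : L t us = eSt v + ((t - s : ℝ) : ℂ) • DE (m (Ws v)) := by
    have h9 := hdiff s t us
    rw [h1, ← h2] at h9
    exact h9
  have h10 := huniq_t (u1 + ((t - s : ℝ) : ℂ) • u2) us (h7.trans h8.symm)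
  have h11 : Wt v + ((t - s : ℝ) : ℂ) • Tt (m (Ws v)) = Ws v := by
    calc Wt v + ((t - s : ℝ) : ℂ) • Tt (m (Ws v)) = ED u1 + ((t - s : ℝ) : ℂ) • ED u2 := by
          rw [h4, h6]
      _ = ED (u1 + ((t - s : ℝ) : ℂ) • u2) := by rw [map_add, map_smul]
      _ = ED us := by rw [h10]
      _ = Ws v := h2.symm
  have h12 := eq_sub_of_add_eq h11
  simpa [ContinuousLinearMap.sub_apply, ContinuousLinearMap.smul_apply,
    ContinuousLinearMap.comp_apply] using h12
end Specs

section Riesz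
set_option linter.unusedSectionVars false
variable {G : Type*} [NormedAddCommGroup G] [InnerProductSpace ℂ G] [CompleteSpace G]
/-- turn an antilinear form into a linear form by conjugating -/
def conjAD (f : AntiDual G) : G →L[ℂ] ℂ :=
  LinearMap.mkContinuous
    { toFun := fun u => starRingEnd ℂ (f u)
      map_add' := fun u v => by simp
      map_smul' := fun c u => by simp }
    ‖f‖ (fun u => by simpa using f.le_opNorm u)

@[simp] lemma conjAD_apply (f : AntiDual G) (u : G) : conjAD f u = starRingEnd ℂ (f u) := rfl

def rieszSymm : AntiDual G →L[ℂ] G :=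
  LinearMap.mkContinuous
    { toFun := fun f => (InnerProductSpace.toDual ℂ G).symm (conjAD f)
      map_add' := fun f g => by
        have : conjAD (f + g) = conjAD f + conjAD g := by ext u; simp [conjAD]
        simp [this]
      map_smul' := fun c f => by
        have h : conjAD (c • f) = starRingEnd ℂ c • conjAD f := by ext u; simp [conjAD]
        simp only [h, RingHom.id_apply]
        rw [LinearIsometryEquiv.map_smulₛₗ]
        simp }
    1 (fun f => by
      simp only [LinearMap.coe_mk, AddHom.coe_mk, one_mul]
      rw [LinearIsometryEquiv.norm_map]
      exact LinearMap.mkContinuous_norm_le _ (norm_nonneg f) _)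

lemma rieszSymm_spec (f : AntiDual G) (u : G) : f u = inner ℂ u (rieszSymm f) := by
  have h1 : (InnerProductSpace.toDual ℂ G) (rieszSymm f) = conjAD f :=
    (InnerProductSpace.toDual ℂ G).apply_symm_apply (conjAD f)
  have h2 : (inner ℂ (rieszSymm f) u : ℂ) = conjAD f u := by
    rw [← h1]; rfl
  calc f u = starRingEnd ℂ (conjAD f u) := by simp
  _ = starRingEnd ℂ (inner ℂ (rieszSymm f) u : ℂ) := by rw [h2]
  _ = inner ℂ u (rieszSymm f) := by rw [inner_conj_symm]

lemma rieszSymm_injective : Function.Injective (rieszSymm (G := G)) := by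
  intro f g h
  ext u
  rw [rieszSymm_spec f u, rieszSymm_spec g u, h]

lemma exists_inverse (L : G →L[ℂ] AntiDual G) (μ : ℝ) (hμ : 0 < μ)
    (hco : ∀ u, μ * ‖u‖ ^ 2 ≤ (L u u).re) :
    ∃ B : AntiDual G →L[ℂ] G, ∀ f, L (B f) = f := by
  set A : G →L[ℂ] G := rieszSymm.comp L with hA
  have hAinner : ∀ u v : G, (inner ℂ v (A u) : ℂ) = L u v := fun u v =>
    (rieszSymm_spec (L u) v).symm
  have hcoA : ∀ u, μ * ‖u‖ ^ 2 ≤ (inner ℂ u (A u) : ℂ).re := fun u => by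
    rw [hAinner]; exact hco u
  have hlow : ∀ u, ‖u‖ ≤ μ⁻¹ * ‖A u‖ := by
    intro u
    rcases eq_or_ne u 0 with rfl | hu
    · simp [mul_nonneg (inv_nonneg.2 hμ.le) (norm_nonneg _)]
    · have h1 : μ * ‖u‖ ^ 2 ≤ ‖u‖ * ‖A u‖ := by
        refine le_trans (hcoA u) (le_trans (Complex.re_le_norm _) ?_)
        exact le_trans (le_of_eq rfl) (norm_inner_le_norm _ _)
      have hu' : 0 < ‖u‖ := norm_pos_iff.2 hu
      rw [le_inv_mul_iff₀ hμ]
      nlinarith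
  have hal : AntilipschitzWith (⟨μ⁻¹, inv_nonneg.2 hμ.le⟩ : NNReal) A :=
    A.antilipschitz_of_bound (fun x => hlow x)
  have hker : LinearMap.ker (A : G →ₗ[ℂ] G) = ⊥ :=
    LinearMap.ker_eq_bot_of_injective hal.injective
  have hcr : IsClosed (Set.range (A : G → G)) :=
    hal.isClosed_range A.uniformContinuous
  have horth : (LinearMap.range (A : G →ₗ[ℂ] G))ᗮ = ⊥ := by
    rw [Submodule.eq_bot_iff]
    intro w hw
    have h0 : (inner ℂ (A w) w : ℂ) = 0 :=
      hw (A w) (LinearMap.mem_range_self (A : G →ₗ[ℂ] G) w)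
    have h1 : (inner ℂ w (A w) : ℂ) = 0 := by
      rw [← inner_conj_symm, h0, map_zero]
    have h2 := hcoA w
    rw [h1] at h2
    simp only [Complex.zero_re] at h2
    have h4 : ‖w‖ ^ 2 ≤ 0 := by
      by_contra h5
      exact absurd h2 (not_le.2 (mul_pos hμ (lt_of_not_ge h5)))
    have h6 : ‖w‖ = 0 := by
      have := le_antisymm h4 (sq_nonneg _)
      simpa [pow_eq_zero_iff] using this
    simpa using norm_eq_zero.mp h6
  have hclosed : IsClosed ((LinearMap.range (A : G →ₗ[ℂ] G) : Submodule ℂ G) : Set G) := by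
    simpa [LinearMap.coe_range] using hcr
  haveI := hclosed.completeSpace_coe
  have hrange : LinearMap.range (A : G →ₗ[ℂ] G) = ⊤ := Submodule.orthogonal_eq_bot_iff.mp horth
  let Aeq := ContinuousLinearEquiv.ofBijective A hker hrange
  refine ⟨(Aeq.symm : G →L[ℂ] G).comp rieszSymm, fun f => ?_⟩
  apply rieszSymm_injective
  exact Aeq.apply_symm_apply (rieszSymm f)

end Riesz

section Core
variable {G H K : Type*} [NormedAddCommGroup G] [NormedSpace ℂ G]
  [NormedAddCommGroup H] [NormedSpace ℂ H] [NormedAddCommGroup K] [NormedSpace ℂ K]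
  [CompleteSpace K]

lemma coreR (MH : Set (H →L[ℂ] H)) (MK : Set (K →L[ℂ] K))
    (L : ℝ → (G →L[ℂ] AntiDual G)) (eSt : H →L[ℂ] AntiDual G)
    (DE : K →L[ℂ] AntiDual G) (ED : G →L[ℂ] K) (m : K →L[ℂ] K) (C : ℝ)
    (hsolve : ∀ t ∈ Set.Icc (0:ℝ) 1, ∃ B : AntiDual G →L[ℂ] G, ∀ f, L t (B f) = f)
    (huniq : ∀ t ∈ Set.Icc (0:ℝ) 1, ∀ u u' : G, L t u = L t u' → u = u')
    (hdiff : ∀ (s t : ℝ) (u : G), L t u = L s u + ((t - s : ℝ) : ℂ) • DE (m (ED u)))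
    (hC : 0 ≤ C)
    (hbound : ∀ t ∈ Set.Icc (0:ℝ) 1, ∀ T : K →L[ℂ] K, specT L DE ED t T → ‖T‖ ≤ C)
    (Wc : H →L[ℂ] K) (Tc : K →L[ℂ] K)
    (hWc : specW L eSt ED 0 Wc) (hTc : specT L DE ED 0 Tc)
    (hWcR : RightDecayPreserving MH MK Wc) (hTcR : RightDecayPreserving MK MK Tc)
    (hmR : RightDecayPreserving MK MK m) :
    ∃ (Wa : H →L[ℂ] K) (Ta : K →L[ℂ] K), specW L eSt ED 1 Wa ∧ specT L DE ED 1 Ta ∧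
      RightDecayPreserving MH MK Wa ∧ RightDecayPreserving MK MK Ta := by
  obtain ⟨n0, hn0⟩ : ∃ n0 : ℕ, C * ‖m‖ < n0 := exists_nat_gt _
  set n : ℕ := n0 + 1 with hn
  have hnpos : (0:ℝ) < (n:ℝ) := by positivity
  have hnB : C * ‖m‖ < (n:ℝ) := by
    refine lt_of_lt_of_le hn0 ?_
    exact_mod_cast Nat.le_succ n0
  have hτIcc : ∀ k : ℕ, k ≤ n → ((k:ℝ)/(n:ℝ)) ∈ Set.Icc (0:ℝ) 1 := by
    intro k hk
    constructor
    · positivity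
    · rw [div_le_one hnpos]; exact_mod_cast hk
  have key : ∀ k : ℕ, k ≤ n → ∃ (W : H →L[ℂ] K) (T : K →L[ℂ] K),
      specW L eSt ED ((k:ℝ)/(n:ℝ)) W ∧ specT L DE ED ((k:ℝ)/(n:ℝ)) T ∧
      RightDecayPreserving MH MK W ∧ RightDecayPreserving MK MK T := by
    intro k
    induction k with
    | zero =>
      intro _
      rw [show ((0:ℕ):ℝ)/(n:ℝ) = 0 by simp]
      exact ⟨Wc, Tc, hWc, hTc, hWcR, hTcR⟩
    | succ k ih =>
      intro hk
      obtain ⟨Ws, Ts, hWs, hTs, hWsR, hTsR⟩ := ih (Nat.le_of_succ_le hk)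
      have hsI := hτIcc k (Nat.le_of_succ_le hk)
      have htI := hτIcc (k+1) hk
      obtain ⟨B, hB⟩ := hsolve _ htI
      set Wt : H →L[ℂ] K := ED.comp (B.comp eSt) with hWt_def
      set Tt : K →L[ℂ] K := ED.comp (B.comp DE) with hTt_def
      have hWt : specW L eSt ED (((k+1:ℕ):ℝ)/(n:ℝ)) Wt := fun v => ⟨B (eSt v), hB _, rfl⟩
      have hTt : specT L DE ED (((k+1:ℕ):ℝ)/(n:ℝ)) Tt := fun w => ⟨B (DE w), hB _, rfl⟩
      set δ : ℂ := ((((k+1:ℕ):ℝ)/(n:ℝ) - ((k:ℕ):ℝ)/(n:ℝ) : ℝ) : ℂ) with hδdef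
      have hδnorm : ‖δ‖ ≤ 1/(n:ℝ) := by
        rw [hδdef, Complex.norm_real]
        have hd : (((k+1:ℕ):ℝ)/(n:ℝ) - ((k:ℕ):ℝ)/(n:ℝ) : ℝ) = 1/(n:ℝ) := by
          push_cast; ring
        rw [hd, Real.norm_eq_abs, abs_of_nonneg (by positivity)]
      have hR1 := specR1 hdiff (huniq _ hsI) hTs hTt
      set y : K →L[ℂ] K := (-δ) • (Ts.comp m) with hydef
      have hy : ‖y‖ < 1 := by
        have h1 : ‖y‖ ≤ ‖δ‖ * (C * ‖m‖) := by
          have hns : ‖y‖ = ‖δ‖ * ‖Ts.comp m‖ := by rw [hydef]; simp [norm_smul]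
          rw [hns]
          have h2 : ‖Ts.comp m‖ ≤ C * ‖m‖ :=
            le_trans (opNorm_comp_le _ _)
              (mul_le_mul_of_nonneg_right (hbound _ hsI Ts hTs) (norm_nonneg m))
          exact mul_le_mul_of_nonneg_left h2 (norm_nonneg δ)
        calc ‖y‖ ≤ ‖δ‖ * (C * ‖m‖) := h1
          _ ≤ (1/(n:ℝ)) * (C * ‖m‖) := by
              exact mul_le_mul_of_nonneg_right hδnorm (by positivity)
          _ < 1 := by
              rw [div_mul_eq_mul_div, one_mul, div_lt_one hnpos]; exact hnB
      have h1y : (1 - y) * Tt = Ts := by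
        have hyT : y * Tt = (-δ) • (Ts.comp (m.comp Tt)) := by
          rw [hydef, smul_mul_assoc]
          all_goals rfl
        rw [← hδdef] at hR1
        rw [sub_mul, one_mul, hyT, neg_smul, sub_neg_eq_add]
        exact eq_sub_iff_add_eq.mp hR1
      have hsum : HasSum (fun i : ℕ => y ^ i) (∑' i : ℕ, y ^ i) :=
        (summable_geometric_of_norm_lt_one hy).hasSum
      have hTt_eq : Tt = (∑' i : ℕ, y ^ i) * Ts := by
        calc Tt = 1 * Tt := (one_mul _).symm
          _ = ((∑' i : ℕ, y ^ i) * (1 - y)) * Tt := by rw [geom_series_mul_neg y hy]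
          _ = (∑' i : ℕ, y ^ i) * ((1 - y) * Tt) := mul_assoc _ _ _
          _ = (∑' i : ℕ, y ^ i) * Ts := by rw [h1y]
      have hTtR : RightDecayPreserving MK MK Tt := by
        intro A hA
        have hpow : ∀ i : ℕ, A * y ^ i ∈ (B0r MK : Set (K →L[ℂ] K)) := by
          intro i
          induction i with
          | zero => simpa using B0r_of_mem hA
          | succ i ihp =>
            have he : A * y ^ (i+1) = (-δ) • (((A * y ^ i).comp Ts).comp m) := by
              rw [pow_succ, ← mul_assoc, hydef, mul_smul_comm]
              all_goals rfl
            rw [he]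
            exact csA_smul _ (B0r_comp hmR (B0r_comp hTsR ihp))
        set φ : (K →L[ℂ] K) →L[ℂ] (K →L[ℂ] K) :=
          (ContinuousLinearMap.compL ℂ K K K A).comp
            ((ContinuousLinearMap.compL ℂ K K K).flip Ts) with hφdef
        have hφ : ∀ Z : K →L[ℂ] K, φ Z = (A * Z) * Ts := fun Z => rfl
        have hterm : ∀ i : ℕ, φ (y ^ i) ∈ (B0r MK : Set (K →L[ℂ] K)) := by
          intro i
          rw [hφ]
          exact B0r_comp hTsR (hpow i)
        have hAT : A.comp Tt = φ (∑' i : ℕ, y ^ i) := by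
          rw [hφ, hTt_eq]
          all_goals rfl
        have hHS := hsum.mapL φ
        rw [hAT]
        exact csA_hasSum hterm hHS
      have hR3 := specR3 hdiff (huniq _ htI) hWs hWt hTt
      rw [← hδdef] at hR3
      have hWtR : RightDecayPreserving MH MK Wt := by
        intro A hA
        have h2 : A.comp Wt = A.comp Ws - δ • (((A.comp Tt).comp m).comp Ws) := by
          rw [hR3, ContinuousLinearMap.comp_sub, ContinuousLinearMap.comp_smul,
            ContinuousLinearMap.comp_assoc, ContinuousLinearMap.comp_assoc]
          all_goals rfl
        rw [h2]
        exact csA_sub (hWsR A hA)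
          (csA_smul _ (B0r_comp hWsR (B0r_comp hmR (hTtR A hA))))
      exact ⟨Wt, Tt, hWt, hTt, hWtR, hTtR⟩
  obtain ⟨Wa, Ta, h1, h2, h3, h4⟩ := key n le_rfl
  rw [show ((n:ℕ):ℝ)/(n:ℝ) = 1 from div_self (ne_of_gt hnpos)] at h1 h2
  exact ⟨Wa, Ta, h1, h2, h3, h4⟩

lemma coreL (MH : Set (H →L[ℂ] H)) (MK : Set (K →L[ℂ] K))
    (L : ℝ → (G →L[ℂ] AntiDual G)) (eSt : H →L[ℂ] AntiDual G)
    (DE : K →L[ℂ] AntiDual G) (ED : G →L[ℂ] K) (m : K →L[ℂ] K) (C : ℝ)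
    (hsolve : ∀ t ∈ Set.Icc (0:ℝ) 1, ∃ B : AntiDual G →L[ℂ] G, ∀ f, L t (B f) = f)
    (huniq : ∀ t ∈ Set.Icc (0:ℝ) 1, ∀ u u' : G, L t u = L t u' → u = u')
    (hdiff : ∀ (s t : ℝ) (u : G), L t u = L s u + ((t - s : ℝ) : ℂ) • DE (m (ED u)))
    (hC : 0 ≤ C)
    (hbound : ∀ t ∈ Set.Icc (0:ℝ) 1, ∀ T : K →L[ℂ] K, specT L DE ED t T → ‖T‖ ≤ C)
    (Wc : H →L[ℂ] K) (Tc : K →L[ℂ] K)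
    (hWc : specW L eSt ED 0 Wc) (hTc : specT L DE ED 0 Tc)
    (hWcL : LeftDecayPreserving MH MK Wc) (hTcL : LeftDecayPreserving MK MK Tc)
    (hmL : LeftDecayPreserving MK MK m) :
    ∃ (Wa : H →L[ℂ] K) (Ta : K →L[ℂ] K), specW L eSt ED 1 Wa ∧ specT L DE ED 1 Ta ∧
      LeftDecayPreserving MH MK Wa ∧ LeftDecayPreserving MK MK Ta := by
  obtain ⟨n0, hn0⟩ : ∃ n0 : ℕ, C * ‖m‖ < n0 := exists_nat_gt _
  set n : ℕ := n0 + 1 with hn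
  have hnpos : (0:ℝ) < (n:ℝ) := by positivity
  have hnB : C * ‖m‖ < (n:ℝ) := by
    refine lt_of_lt_of_le hn0 ?_
    exact_mod_cast Nat.le_succ n0
  have hτIcc : ∀ k : ℕ, k ≤ n → ((k:ℝ)/(n:ℝ)) ∈ Set.Icc (0:ℝ) 1 := by
    intro k hk
    constructor
    · positivity
    · rw [div_le_one hnpos]; exact_mod_cast hk
  have key : ∀ k : ℕ, k ≤ n → ∃ (W : H →L[ℂ] K) (T : K →L[ℂ] K),
      specW L eSt ED ((k:ℝ)/(n:ℝ)) W ∧ specT L DE ED ((k:ℝ)/(n:ℝ)) T ∧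
      LeftDecayPreserving MH MK W ∧ LeftDecayPreserving MK MK T := by
    intro k
    induction k with
    | zero =>
      intro _
      rw [show ((0:ℕ):ℝ)/(n:ℝ) = 0 by simp]
      exact ⟨Wc, Tc, hWc, hTc, hWcL, hTcL⟩
    | succ k ih =>
      intro hk
      obtain ⟨Ws, Ts, hWs, hTs, hWsL, hTsL⟩ := ih (Nat.le_of_succ_le hk)
      have hsI := hτIcc k (Nat.le_of_succ_le hk)
      have htI := hτIcc (k+1) hk
      obtain ⟨B, hB⟩ := hsolve _ htI
      set Wt : H →L[ℂ] K := ED.comp (B.comp eSt) with hWt_def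
      set Tt : K →L[ℂ] K := ED.comp (B.comp DE) with hTt_def
      have hWt : specW L eSt ED (((k+1:ℕ):ℝ)/(n:ℝ)) Wt := fun v => ⟨B (eSt v), hB _, rfl⟩
      have hTt : specT L DE ED (((k+1:ℕ):ℝ)/(n:ℝ)) Tt := fun w => ⟨B (DE w), hB _, rfl⟩
      set δ : ℂ := ((((k+1:ℕ):ℝ)/(n:ℝ) - ((k:ℕ):ℝ)/(n:ℝ) : ℝ) : ℂ) with hδdef
      have hδnorm : ‖δ‖ ≤ 1/(n:ℝ) := by
        rw [hδdef, Complex.norm_real]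
        have hd : (((k+1:ℕ):ℝ)/(n:ℝ) - ((k:ℕ):ℝ)/(n:ℝ) : ℝ) = 1/(n:ℝ) := by
          push_cast; ring
        rw [hd, Real.norm_eq_abs, abs_of_nonneg (by positivity)]
      have hR2 := specR2 hdiff (huniq _ htI) hTs hTt
      rw [← hδdef] at hR2
      set y : K →L[ℂ] K := (-δ) • (m.comp Ts) with hydef
      have hy : ‖y‖ < 1 := by
        have h1 : ‖y‖ ≤ ‖δ‖ * (C * ‖m‖) := by
          have hns : ‖y‖ = ‖δ‖ * ‖m.comp Ts‖ := by rw [hydef]; simp [norm_smul]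
          rw [hns]
          have h2 : ‖m.comp Ts‖ ≤ C * ‖m‖ := by
            refine le_trans (opNorm_comp_le _ _) ?_
            rw [mul_comm]
            exact mul_le_mul_of_nonneg_right (hbound _ hsI Ts hTs) (norm_nonneg m)
          exact mul_le_mul_of_nonneg_left h2 (norm_nonneg δ)
        calc ‖y‖ ≤ ‖δ‖ * (C * ‖m‖) := h1
          _ ≤ (1/(n:ℝ)) * (C * ‖m‖) := by
              exact mul_le_mul_of_nonneg_right hδnorm (by positivity)
          _ < 1 := by
              rw [div_mul_eq_mul_div, one_mul, div_lt_one hnpos]; exact hnB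
      have h1y : Tt * (1 - y) = Ts := by
        have hyT : Tt * y = (-δ) • (Tt.comp (m.comp Ts)) := by
          rw [hydef, mul_smul_comm]
          all_goals rfl
        rw [mul_sub, mul_one, hyT, neg_smul, sub_neg_eq_add]
        exact eq_sub_iff_add_eq.mp hR2
      have hsum : HasSum (fun i : ℕ => y ^ i) (∑' i : ℕ, y ^ i) :=
        (summable_geometric_of_norm_lt_one hy).hasSum
      have hTt_eq : Tt = Ts * (∑' i : ℕ, y ^ i) := by
        calc Tt = Tt * 1 := (mul_one _).symm
          _ = Tt * ((1 - y) * (∑' i : ℕ, y ^ i)) := by rw [mul_neg_geom_series y hy]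
          _ = (Tt * (1 - y)) * (∑' i : ℕ, y ^ i) := (mul_assoc _ _ _).symm
          _ = Ts * (∑' i : ℕ, y ^ i) := by rw [h1y]
      have hTtL : LeftDecayPreserving MK MK Tt := by
        intro A hA
        have hpow : ∀ i : ℕ, y ^ i * A ∈ (B0l MK : Set (K →L[ℂ] K)) := by
          intro i
          induction i with
          | zero => simpa using B0l_of_mem hA
          | succ i ihp =>
            have he : y ^ (i+1) * A = (-δ) • (m.comp (Ts.comp (y ^ i * A))) := by
              rw [pow_succ', mul_assoc, hydef, smul_mul_assoc]
              all_goals rfl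
            rw [he]
            exact csA_smul _ (B0l_comp hmL (B0l_comp hTsL ihp))
        set φ : (K →L[ℂ] K) →L[ℂ] (K →L[ℂ] K) :=
          (ContinuousLinearMap.compL ℂ K K K Ts).comp
            ((ContinuousLinearMap.compL ℂ K K K).flip A) with hφdef
        have hφ : ∀ Z : K →L[ℂ] K, φ Z = Ts * (Z * A) := fun Z => rfl
        have hterm : ∀ i : ℕ, φ (y ^ i) ∈ (B0l MK : Set (K →L[ℂ] K)) := by
          intro i
          rw [hφ]
          exact B0l_comp hTsL (hpow i)
        have hAT : Tt.comp A = φ (∑' i : ℕ, y ^ i) := by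
          rw [hφ, hTt_eq]
          all_goals rfl
        have hHS := hsum.mapL φ
        rw [hAT]
        exact csA_hasSum hterm hHS
      have hR3 := specR3 hdiff (huniq _ htI) hWs hWt hTt
      rw [← hδdef] at hR3
      have hWtL : LeftDecayPreserving MH MK Wt := by
        intro A hA
        have h2 : Wt.comp A = Ws.comp A - δ • (Tt.comp (m.comp (Ws.comp A))) := by
          rw [hR3, ContinuousLinearMap.sub_comp, ContinuousLinearMap.smul_comp,
            ContinuousLinearMap.comp_assoc, ContinuousLinearMap.comp_assoc]
          all_goals rfl
        rw [h2]
        exact csA_sub (hWsL A hA)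
          (csA_smul _ (B0l_comp hTtL (B0l_comp hmL (hWsL A hA))))
      exact ⟨Wt, Tt, hWt, hTt, hWtL, hTtL⟩
  obtain ⟨Wa, Ta, h1, h2, h3, h4⟩ := key n le_rfl
  rw [show ((n:ℕ):ℝ)/(n:ℝ) = 1 from div_self (ne_of_gt hnpos)] at h1 h2
  exact ⟨Wa, Ta, h1, h2, h3, h4⟩

end Core

set_option maxHeartbeats 1000000 in
set_option synthInstance.maxHeartbeats 100000 in
/-- Perturbative criterion for the decay preserving property of
`D (Δ_a − z)⁻¹` and `D (D*aD − z)⁻¹ D*`. -/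
theorem stmt6 {G H E K : Type*}
    [NormedAddCommGroup G] [InnerProductSpace ℂ G] [CompleteSpace G]
    [NormedAddCommGroup H] [InnerProductSpace ℂ H] [CompleteSpace H]
    [NormedAddCommGroup E] [InnerProductSpace ℂ E] [CompleteSpace E]
    [NormedAddCommGroup K] [InnerProductSpace ℂ K] [CompleteSpace K]
    -- `(G, H)` and `(E, K)` are Friedrichs modules:
    (MH : Set (H →L[ℂ] H)) (hMH : IsHilbertModule H MH)
    (e : G →L[ℂ] H) (he : Function.Injective ⇑e) (hd : DenseRange ⇑e)
    (MK : Set (K →L[ℂ] K)) (hMK : IsHilbertModule K MK)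
    (eE : E →L[ℂ] K) (heE : Function.Injective ⇑eE) (hdE : DenseRange ⇑eE)
    (D : G →L[ℂ] E) (a c : E →L[ℂ] AntiDual E)
    -- coercivity of `D*aD` and `D*cD`:
    (μ ν : ℝ) (hμ : 0 < μ) (hν : 0 < ν)
    (hcoa : ∀ u : G, μ * ‖u‖ ^ 2 - ν * ‖e u‖ ^ 2 ≤ (a (D u) (D u)).re)
    (hcoc : ∀ u : G, μ * ‖u‖ ^ 2 - ν * ‖e u‖ ^ 2 ≤ (c (D u) (D u)).re)
    (z : ℂ) (hz : z.re ≤ -ν)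
    -- `Wc = D (Δ_c − z)⁻¹ ∈ B(H,K)` and `Tc = D (D*cD − z)⁻¹ D* ∈ B(K)`:
    (Wc : H →L[ℂ] K)
    (hWc : ∀ v : H, ∃ u : G,
      ((precompAntiDual D).comp (c.comp D)) u - z • ((toAntiDual e).comp e) u
          = toAntiDual e v ∧ Wc v = eE (D u))
    (Tc : K →L[ℂ] K)
    (hTc : ∀ w : K, ∃ u : G,
      ((precompAntiDual D).comp (c.comp D)) u - z • ((toAntiDual e).comp e) u
          = precompAntiDual D (toAntiDual eE w) ∧ Tc w = eE (D u))
    -- `a − c` restricts to a bounded operator `m` on `K`: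
    (m : K →L[ℂ] K) (hm : ∀ u : E, (a - c) u = toAntiDual eE (m (eE u))) :
    -- right decay preserving version:
    ((RightDecayPreserving MH MK Wc → RightDecayPreserving MK MK Tc →
      RightDecayPreserving MK MK m →
      ∃ (Wa : H →L[ℂ] K) (Ta : K →L[ℂ] K),
        (∀ v : H, ∃ u : G,
          ((precompAntiDual D).comp (a.comp D)) u - z • ((toAntiDual e).comp e) u
              = toAntiDual e v ∧ Wa v = eE (D u)) ∧
        (∀ w : K, ∃ u : G,
          ((precompAntiDual D).comp (a.comp D)) u - z • ((toAntiDual e).comp e) u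
              = precompAntiDual D (toAntiDual eE w) ∧ Ta w = eE (D u)) ∧
        RightDecayPreserving MH MK Wa ∧ RightDecayPreserving MK MK Ta)) ∧
    -- left decay preserving version:
    ((LeftDecayPreserving MH MK Wc → LeftDecayPreserving MK MK Tc →
      LeftDecayPreserving MK MK m →
      ∃ (Wa : H →L[ℂ] K) (Ta : K →L[ℂ] K),
        (∀ v : H, ∃ u : G,
          ((precompAntiDual D).comp (a.comp D)) u - z • ((toAntiDual e).comp e) u
              = toAntiDual e v ∧ Wa v = eE (D u)) ∧
        (∀ w : K, ∃ u : G,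
          ((precompAntiDual D).comp (a.comp D)) u - z • ((toAntiDual e).comp e) u
              = precompAntiDual D (toAntiDual eE w) ∧ Ta w = eE (D u)) ∧
        LeftDecayPreserving MH MK Wa ∧ LeftDecayPreserving MK MK Ta)) := by
  set L : ℝ → (G →L[ℂ] AntiDual G) := fun t =>
    (precompAntiDual D).comp ((c + (t:ℂ) • (a - c)).comp D) - z • ((toAntiDual e).comp e)
    with hLdef
  have hLapp : ∀ (t : ℝ) (u : G), L t u
      = precompAntiDual D (c (D u)) + (t:ℂ) • precompAntiDual D ((a - c) (D u))
        - z • (toAntiDual e (e u)) := by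
    intro t u
    simp only [hLdef, ContinuousLinearMap.sub_apply, ContinuousLinearMap.smul_apply,
      ContinuousLinearMap.comp_apply, ContinuousLinearMap.add_apply, map_add, map_smul]
  have hLval : ∀ (t : ℝ) (u w : G), (L t u) w
      = (c (D u)) (D w) + (t:ℂ) * ((a (D u)) (D w) - (c (D u)) (D w))
        - z * (inner ℂ (e w) (e u) : ℂ) := by
    intro t u w
    rw [hLapp]
    simp only [ContinuousLinearMap.sub_apply, ContinuousLinearMap.add_apply,
      ContinuousLinearMap.smul_apply, smul_eq_mul, toAntiDual_apply, precompAntiDual_apply]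
  have hcoer : ∀ t ∈ Set.Icc (0:ℝ) 1, ∀ u : G, μ * ‖u‖ ^ 2 ≤ ((L t u) u).re := by
    intro t ht u
    rw [hLval t u u]
    have hin : (inner ℂ (e u) (e u) : ℂ) = ((‖e u‖ ^ 2 : ℝ) : ℂ) := by
      rw [inner_self_eq_norm_sq_to_K]
      norm_cast
    rw [hin]
    have hre : (c (D u) (D u) + (t:ℂ) * (a (D u) (D u) - c (D u) (D u))
        - z * ((‖e u‖ ^ 2 : ℝ) : ℂ)).re
        = (c (D u) (D u)).re + t * ((a (D u) (D u)).re - (c (D u) (D u)).re)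
          - z.re * ‖e u‖ ^ 2 := by
      simp [← Complex.ofReal_pow, Complex.sub_re, Complex.add_re, Complex.mul_re,
        Complex.ofReal_re, Complex.ofReal_im]
    rw [hre]
    have h1 := hcoa u
    have h2 := hcoc u
    obtain ⟨ht0, ht1⟩ := ht
    nlinarith [sq_nonneg ‖e u‖, mul_nonneg ht0 (sub_nonneg.2 h1),
      mul_nonneg (sub_nonneg.2 ht1) (sub_nonneg.2 h2),
      mul_nonneg (sq_nonneg ‖e u‖) (by linarith : (0:ℝ) ≤ -ν - z.re)]
  have huniq : ∀ t ∈ Set.Icc (0:ℝ) 1, ∀ u u' : G, L t u = L t u' → u = u' := by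
    intro t ht u u' hEq
    have h0 : L t (u - u') = 0 := by rw [map_sub, hEq, sub_self]
    have h1 := hcoer t ht (u - u')
    rw [h0] at h1
    simp only [ContinuousLinearMap.zero_apply, Complex.zero_re] at h1
    have h2 : ‖u - u'‖ ^ 2 ≤ 0 := by
      by_contra h3
      exact absurd h1 (not_le.2 (mul_pos hμ (lt_of_not_ge h3)))
    have h4 : ‖u - u'‖ = 0 := by
      have := le_antisymm h2 (sq_nonneg _)
      simpa [pow_eq_zero_iff] using this
    exact sub_eq_zero.mp (norm_eq_zero.mp h4)
  have hsolve : ∀ t ∈ Set.Icc (0:ℝ) 1, ∃ B : AntiDual G →L[ℂ] G, ∀ f, L t (B f) = f :=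
    fun t ht => exists_inverse (L t) μ hμ (hcoer t ht)
  have hdiff : ∀ (s t : ℝ) (u : G), L t u = L s u
      + ((t - s : ℝ) : ℂ) • ((precompAntiDual D).comp (toAntiDual eE)) (m ((eE.comp D) u)) := by
    intro s t u
    ext w
    have hDEw : (((precompAntiDual D).comp (toAntiDual eE)) (m ((eE.comp D) u))) w
        = (a (D u)) (D w) - (c (D u)) (D w) := by
      simp only [ContinuousLinearMap.comp_apply, precompAntiDual_apply]
      rw [← hm (D u)]
      simp [ContinuousLinearMap.sub_apply]
    simp only [ContinuousLinearMap.add_apply, ContinuousLinearMap.smul_apply, smul_eq_mul]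
    rw [hDEw, hLval, hLval]
    push_cast
    ring
  set C : ℝ := ‖eE.comp D‖ ^ 2 / μ with hC
  have hC0 : 0 ≤ C := by positivity
  have hbound : ∀ t ∈ Set.Icc (0:ℝ) 1, ∀ T : K →L[ℂ] K,
      specT L ((precompAntiDual D).comp (toAntiDual eE)) (eE.comp D) t T → ‖T‖ ≤ C := by
    intro t ht T hT
    refine ContinuousLinearMap.opNorm_le_bound T hC0 ?_
    intro w
    obtain ⟨u, h1, h2⟩ := hT w
    have h3 : ((L t u) u).re = (inner ℂ ((eE.comp D) u) w : ℂ).re := by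
      rw [h1]
      simp only [ContinuousLinearMap.comp_apply, precompAntiDual_apply, toAntiDual_apply]
    have h4 := hcoer t ht u
    rw [h3] at h4
    have h5 : (inner ℂ ((eE.comp D) u) w : ℂ).re ≤ ‖eE.comp D‖ * ‖u‖ * ‖w‖ := by
      refine le_trans (Complex.re_le_norm _) ?_
      refine le_trans (le_of_eq rfl) ?_
      refine le_trans (norm_inner_le_norm _ _) ?_
      exact mul_le_mul_of_nonneg_right ((eE.comp D).le_opNorm u) (norm_nonneg w)
    have h6 : ‖T w‖ ≤ ‖eE.comp D‖ * ‖u‖ := by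
      rw [h2]; exact (eE.comp D).le_opNorm u
    rw [hC, div_mul_eq_mul_div, le_div_iff₀ hμ]
    rcases eq_or_lt_of_le (norm_nonneg u) with hU | hU
    · have h7 : ‖T w‖ ≤ 0 := by rw [← hU, mul_zero] at h6; exact h6
      have h7' : ‖T w‖ = 0 := le_antisymm h7 (norm_nonneg _)
      rw [h7', zero_mul]
      positivity
    · have h7 : μ * ‖u‖ ≤ ‖eE.comp D‖ * ‖w‖ := by
        have h8 := h4.trans h5
        have h9 : (μ * ‖u‖) * ‖u‖ ≤ (‖eE.comp D‖ * ‖w‖) * ‖u‖ := by nlinarith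
        exact le_of_mul_le_mul_right h9 hU
      have h8 : ‖T w‖ * μ ≤ ‖eE.comp D‖ * ‖u‖ * μ := mul_le_mul_of_nonneg_right h6 hμ.le
      have h9 : ‖eE.comp D‖ * (μ * ‖u‖) ≤ ‖eE.comp D‖ * (‖eE.comp D‖ * ‖w‖) :=
        mul_le_mul_of_nonneg_left h7 (norm_nonneg _)
      calc ‖T w‖ * μ ≤ ‖eE.comp D‖ * ‖u‖ * μ := h8
        _ = ‖eE.comp D‖ * (μ * ‖u‖) := by ring
        _ ≤ ‖eE.comp D‖ * (‖eE.comp D‖ * ‖w‖) := h9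
        _ = ‖eE.comp D‖ ^ 2 * ‖w‖ := by ring
  have hstmt : ∀ u : G, ((precompAntiDual D).comp (a.comp D)) u
      - z • (((toAntiDual e).comp e) u) = L 1 u := by
    intro u
    rw [hLapp]
    simp only [Complex.ofReal_one, one_smul, ContinuousLinearMap.comp_apply,
      ContinuousLinearMap.sub_apply, map_sub]
    abel
  have hstmt0 : ∀ u : G, ((precompAntiDual D).comp (c.comp D)) u
      - z • (((toAntiDual e).comp e) u) = L 0 u := by
    intro u
    ext w
    rw [hLval]
    simp only [ContinuousLinearMap.sub_apply, ContinuousLinearMap.smul_apply,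
      ContinuousLinearMap.comp_apply, precompAntiDual_apply, toAntiDual_apply, smul_eq_mul,
      Complex.ofReal_zero]
    ring
  have hWc0 : specW L (toAntiDual e) (eE.comp D) 0 Wc := by
    intro v
    obtain ⟨u, h1, h2⟩ := hWc v
    exact ⟨u, by rw [← hstmt0]; exact h1, by simp only [ContinuousLinearMap.comp_apply]; exact h2⟩
  have hTc0 : specT L ((precompAntiDual D).comp (toAntiDual eE)) (eE.comp D) 0 Tc := by
    intro w
    obtain ⟨u, h1, h2⟩ := hTc w
    refine ⟨u, ?_, by simp only [ContinuousLinearMap.comp_apply]; exact h2⟩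
    rw [← hstmt0]
    simp only [ContinuousLinearMap.comp_apply]
    exact h1
  constructor
  · intro hWcR hTcR hmR
    obtain ⟨Wa, Ta, h1, h2, h3, h4⟩ := coreR MH MK L (toAntiDual e)
      ((precompAntiDual D).comp (toAntiDual eE)) (eE.comp D) m C hsolve huniq hdiff hC0 hbound
      Wc Tc hWc0 hTc0 hWcR hTcR hmR
    refine ⟨Wa, Ta, ?_, ?_, h3, h4⟩
    · intro v
      obtain ⟨u, hu1, hu2⟩ := h1 v
      exact ⟨u, by rw [hstmt]; exact hu1,
        by simp only [ContinuousLinearMap.comp_apply] at hu2; exact hu2⟩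
    · intro w
      obtain ⟨u, hu1, hu2⟩ := h2 w
      refine ⟨u, ?_, by simp only [ContinuousLinearMap.comp_apply] at hu2; exact hu2⟩
      rw [hstmt]
      simp only [ContinuousLinearMap.comp_apply] at hu1
      exact hu1
  · intro hWcL hTcL hmL
    obtain ⟨Wa, Ta, h1, h2, h3, h4⟩ := coreL MH MK L (toAntiDual e)
      ((precompAntiDual D).comp (toAntiDual eE)) (eE.comp D) m C hsolve huniq hdiff hC0 hbound
      Wc Tc hWc0 hTc0 hWcL hTcL hmL
    refine ⟨Wa, Ta, ?_, ?_, h3, h4⟩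
    · intro v
      obtain ⟨u, hu1, hu2⟩ := h1 v
      exact ⟨u, by rw [hstmt]; exact hu1,
        by simp only [ContinuousLinearMap.comp_apply] at hu2; exact hu2⟩
    · intro w
      obtain ⟨u, hu1, hu2⟩ := h2 w
      refine ⟨u, ?_, by simp only [ContinuousLinearMap.comp_apply] at hu2; exact hu2⟩
      rw [hstmt]
      simp only [ContinuousLinearMap.comp_apply] at hu1
      exact hu1


end
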